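/- Let I be a subset of vertices of Y and let Y_I be the graph obtained by contracting I to a single vertex V_I. If O¹ and O² are acyclic orientations of Y agreeing on I (with I equal to the vw-interval of both, admitting a common linear extension v_1⋯v_k of I), and the induced orientations O¹_{Y_I} and O²_{Y_I} are κ-equivalent in Y_I, then O¹ and O² are κ-equivalent in Y. -/

import Mathlib

namespace AcycPaper

variable {V : Type*}

/-- `r` is an orientation of the graph `Y`: exactly one direction per edge. -/
def IsOrientation (Y : SimpleGraph V) (r : V → V → Prop) : Prop :=
  (∀ i j, Y.Adj i j ↔ (r i j ∨ r j i)) ∧ ∀ i j, r i j → ¬ r j i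

/-- A relation is acyclic if it has no directed cycles. -/
def IsAcyclicRel (r : V → V → Prop) : Prop := ∀ v, ¬ Relation.TransGen r v v

/-- The set of acyclic orientations of `Y`. -/
def Acyc (Y : SimpleGraph V) : Set (V → V → Prop) :=
  {r | IsOrientation Y r ∧ IsAcyclicRel r}

/-- `v` is a source: no edge points into `v`. -/
def IsSource (r : V → V → Prop) (v : V) : Prop := ∀ j, ¬ r j v

open Classical in
/-- Click (source-to-sink move) at `v`: reverse all edges incident to `v`. -/
def click (r : V → V → Prop) (v : V) : V → V → Prop :=
  fun i j => if v = i ∨ v = j then r j i else r i j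

/-- One click step between acyclic orientations. -/
def ClickStep (Y : SimpleGraph V) (r r' : V → V → Prop) : Prop :=
  r ∈ Acyc Y ∧ ∃ v, IsSource r v ∧ r' = click r v

/-- κ-equivalence: the equivalence relation generated by clicks. -/
def KEquiv (Y : SimpleGraph V) : (V → V → Prop) → (V → V → Prop) → Prop :=
  Relation.EqvGen (ClickStep Y)

/-- The set of κ-equivalence classes of acyclic orientations. -/
def KQuot (Y : SimpleGraph V) := Quot (fun a b : Acyc Y => ClickStep Y a.1 b.1)

/-- κ(Y): number of κ-equivalence classes. -/
noncomputable def kappa (Y : SimpleGraph V) : ℕ := Nat.card (KQuot Y)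

/-- α(Y): number of acyclic orientations. -/
noncomputable def alpha (Y : SimpleGraph V) : ℕ := Nat.card (Acyc Y)

open Classical in
/-- The class of a vertex after contracting the set I to the representative v₀:
v₀ represents all of I, every other vertex represents itself. -/
def cls (I : Set V) (v₀ : V) (a : V) : Set V := if a = v₀ then I ∪ {v₀} else {a}

/-- The graph Y_I obtained from Y by contracting the vertex set I to the single
vertex v₀ (the other vertices of I become isolated). -/
def contractSetG (Y : SimpleGraph V) (I : Set V) (v₀ : V) : SimpleGraph V where
  Adj a b := a ∉ I \ {v₀} ∧ b ∉ I \ {v₀} ∧ a ≠ b ∧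
    ∃ a' ∈ cls I v₀ a, ∃ b' ∈ cls I v₀ b, Y.Adj a' b'
  symm := by
    constructor
    rintro a b ⟨h1, h2, h3, a', ha, b', hb, hadj⟩
    exact ⟨h2, h1, h3.symm, b', hb, a', ha, hadj.symm⟩
  loopless := by constructor; rintro a ⟨_, _, h, _⟩; exact h rfl

/-- The orientation induced on the contracted graph Y_I by an orientation r. -/
def contractSetRel (r : V → V → Prop) (I : Set V) (v₀ : V) : V → V → Prop :=
  fun a b => a ∉ I \ {v₀} ∧ b ∉ I \ {v₀} ∧ a ≠ b ∧
    ∃ a' ∈ cls I v₀ a, ∃ b' ∈ cls I v₀ b, r a' b'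


open Relation

section ClickLemmas

variable {V : Type*}

lemma rel_adj {Y : SimpleGraph V} {r : V → V → Prop} (h : IsOrientation Y r)
    {a b : V} (hab : r a b) : Y.Adj a b := (h.1 a b).mpr (Or.inl hab)

lemma rel_ne {Y : SimpleGraph V} {r : V → V → Prop} (h : IsOrientation Y r)
    {a b : V} (hab : r a b) : a ≠ b := (rel_adj h hab).ne

lemma isOrientation_click {Y : SimpleGraph V} {r : V → V → Prop}
    (h : IsOrientation Y r) (u : V) : IsOrientation Y (click r u) := by
  constructor
  · intro i j
    have := h.1 i j
    unfold click
    split_ifs <;> tauto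
  · intro i j
    have h1 := h.2 i j
    have h2 := h.2 j i
    unfold click
    split_ifs <;> tauto

lemma click_step_struct {r : V → V → Prop} {u : V} (hu : IsSource r u) {a b : V}
    (hab : click r u a b) : a ≠ u ∧ (b = u ∨ r a b) := by
  unfold click at hab
  split_ifs at hab with h
  · rcases h with rfl | rfl
    · exact absurd hab (hu b)
    · refine ⟨fun hau => absurd hab ?_, Or.inl rfl⟩
      rw [hau]; exact hu _
  · push_neg at h
    exact ⟨fun hau => h.1 hau.symm, Or.inr hab⟩

lemma transGen_click {r : V → V → Prop} {u : V} (hu : IsSource r u) {x y : V}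
    (h : TransGen (click r u) x y) : x ≠ u ∧ (y = u ∨ TransGen r x y) := by
  induction h with
  | single hs =>
      obtain ⟨h1, h2⟩ := click_step_struct hu hs
      exact ⟨h1, h2.imp id TransGen.single⟩
  | tail hxb hbc ih =>
      obtain ⟨hb1, hb2⟩ := click_step_struct hu hbc
      refine ⟨ih.1, ?_⟩
      rcases ih.2 with rfl | htr
      · exact absurd rfl hb1
      · exact hb2.imp id htr.tail

lemma acyc_click {Y : SimpleGraph V} {r : V → V → Prop} (h : r ∈ Acyc Y) {u : V}
    (hu : IsSource r u) : click r u ∈ Acyc Y := by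
  refine ⟨isOrientation_click h.1 u, fun x hx => ?_⟩
  obtain ⟨h1, h2⟩ := transGen_click hu hx
  rcases h2 with rfl | htr
  · exact h1 rfl
  · exact h.2 x htr

end ClickLemmas


section Contract

variable {V : Type*}

open Classical in
/-- Projection to the contracted graph: everything in `I` maps to `v`. -/
noncomputable def proj (I : Set V) (v : V) (a : V) : V := if a ∈ I then v else a

lemma proj_mem {I : Set V} {v a : V} (h : a ∈ I) : proj I v a = v := if_pos h
lemma proj_not_mem {I : Set V} {v a : V} (h : a ∉ I) : proj I v a = a := if_neg h

open Classical in
/-- Lift of an orientation `s` of the contracted graph back to `Y`, using `rin`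
inside `I`. -/
def liftRel (Y : SimpleGraph V) (I : Set V) (v : V) (rin s : V → V → Prop) :
    V → V → Prop := fun a b =>
  Y.Adj a b ∧ (if a ∈ I then (if b ∈ I then rin a b else s v b)
               else (if b ∈ I then s a v else s a b))

open Classical in
/-- Intermediate orientation after clicking the subset `J ⊆ I`. -/
def stateRel (Y : SimpleGraph V) (I J : Set V) (rin s : V → V → Prop) :
    V → V → Prop := fun a b =>
  Y.Adj a b ∧
    (if a ∈ I then (if b ∈ I then (if (a ∈ J ↔ b ∈ J) then rin a b else rin b a)
                    else a ∉ J)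
     else (if b ∈ I then b ∈ J else s a b))

lemma adj_contract_boundary {Y : SimpleGraph V} {I : Set V} {v : V} (hv : v ∈ I)
    {a b : V} (ha : a ∈ I) (hb : b ∉ I) (hab : Y.Adj a b) :
    (contractSetG Y I v).Adj v b := by
  have hbv : b ≠ v := fun h => hb (h ▸ hv)
  refine ⟨fun h => h.2 rfl, fun h => hb h.1, fun h => hbv h.symm, a, ?_, b, ?_, hab⟩
  · simp [cls]
    tauto
  · simp [cls, hbv]

lemma adj_contract_outside {Y : SimpleGraph V} {I : Set V} {v : V} (hv : v ∈ I)
    {a b : V} (ha : a ∉ I) (hb : b ∉ I) (hab : Y.Adj a b) :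
    (contractSetG Y I v).Adj a b := by
  have hav : a ≠ v := fun h => ha (h ▸ hv)
  have hbv : b ≠ v := fun h => hb (h ▸ hv)
  exact ⟨fun h => ha h.1, fun h => hb h.1, hab.ne, a, by simp [cls, hav], b,
    by simp [cls, hbv], hab⟩

lemma not_rel_isolated {Y : SimpleGraph V} {I : Set V} {v : V}
    {s : V → V → Prop} (hs : IsOrientation (contractSetG Y I v) s)
    {u : V} (hu : u ∈ I) (huv : u ≠ v) (x : V) : ¬ s x u ∧ ¬ s u x := by
  constructor <;> intro h
  · exact (rel_adj hs h).2.1 ⟨hu, huv⟩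
  · exact (rel_adj hs h).1 ⟨hu, huv⟩

lemma click_isolated {Y : SimpleGraph V} {I : Set V} {v : V}
    {s : V → V → Prop} (hs : IsOrientation (contractSetG Y I v) s)
    {u : V} (hu : u ∈ I) (huv : u ≠ v) : click s u = s := by
  funext a b
  apply propext
  unfold click
  split_ifs with h
  · rcases h with rfl | rfl
    · exact ⟨fun h' => absurd h' (not_rel_isolated hs hu huv b).1,
        fun h' => absurd h' (not_rel_isolated hs hu huv b).2⟩
    · exact ⟨fun h' => absurd h' (not_rel_isolated hs hu huv a).2,
        fun h' => absurd h' (not_rel_isolated hs hu huv a).1⟩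
  · exact Iff.rfl

end Contract


section Lift

variable {V : Type*} {Y : SimpleGraph V} {I : Set V} {v : V}
  {r₁ s : V → V → Prop}

lemma mem_interval {r : V → V → Prop} {v w : V} {I : Set V}
    (hI : I = {a | ReflTransGen r v a ∧ ReflTransGen r a w})
    {x y c : V} (hx : x ∈ I) (hy : y ∈ I) (h1 : r x c) (h2 : r c y) : c ∈ I := by
  subst hI
  exact ⟨hx.1.tail h1, ReflTransGen.head h2 hy.2⟩

lemma lift_isOrientation (hv : v ∈ I) (h1 : IsOrientation Y r₁)
    (hs : IsOrientation (contractSetG Y I v) s) :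
    IsOrientation Y (liftRel Y I v r₁ s) := by
  constructor
  · intro i j
    constructor
    · intro hadj
      by_cases hi : i ∈ I <;> by_cases hj : j ∈ I <;>
        simp only [liftRel, if_pos, if_neg, hi, hj]
      · have := (h1.1 i j).mp hadj
        tauto
      · have := (hs.1 v j).mp (adj_contract_boundary hv hi hj hadj)
        tauto
      · have := (hs.1 v i).mp (adj_contract_boundary hv hj hi hadj.symm)
        tauto
      · have := (hs.1 i j).mp (adj_contract_outside hv hi hj hadj)
        tauto
    · rintro (⟨hadj, -⟩ | ⟨hadj, -⟩)
      · exact hadj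
      · exact hadj.symm
  · intro i j hij hji
    by_cases hi : i ∈ I <;> by_cases hj : j ∈ I <;>
      simp only [liftRel, if_pos, if_neg, hi, hj] at hij hji
    exacts [h1.2 _ _ hij.2 hji.2, hs.2 _ _ hij.2 hji.2, hs.2 _ _ hij.2 hji.2,
      hs.2 _ _ hij.2 hji.2]

lemma lift_step (hv : v ∈ I) {a b : V} (h : liftRel Y I v r₁ s a b) :
    (a ∈ I ∧ b ∈ I ∧ r₁ a b) ∨ s (proj I v a) (proj I v b) := by
  obtain ⟨hadj, h⟩ := h
  by_cases ha : a ∈ I <;> by_cases hb : b ∈ I <;>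
    simp only [if_pos, if_neg, ha, hb] at h
  · exact Or.inl ⟨ha, hb, h⟩
  · rw [proj_mem ha, proj_not_mem hb]; exact Or.inr h
  · rw [proj_not_mem ha, proj_mem hb]; exact Or.inr h
  · rw [proj_not_mem ha, proj_not_mem hb]; exact Or.inr h

lemma lift_acyclic (hv : v ∈ I) (h1 : r₁ ∈ Acyc Y)
    (hs : s ∈ Acyc (contractSetG Y I v)) :
    IsAcyclicRel (liftRel Y I v r₁ s) := by
  have key : ∀ a b, TransGen (liftRel Y I v r₁ s) a b →
      TransGen s (proj I v a) (proj I v b) ∨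
        (a ∈ I ∧ b ∈ I ∧ TransGen (fun x y => x ∈ I ∧ y ∈ I ∧ r₁ x y) a b) := by
    intro a b h
    induction h with
    | single h =>
        rcases lift_step hv h with ⟨ha, hb, hr⟩ | hstep
        · exact Or.inr ⟨ha, hb, TransGen.single ⟨ha, hb, hr⟩⟩
        · exact Or.inl (TransGen.single hstep)
    | @tail b c hab hbc ih =>
        rcases lift_step hv hbc with ⟨hb, hc, hr⟩ | hstep
        · rcases ih with htr | ⟨ha, hb', htr⟩
          · refine Or.inl ?_
            have : proj I v b = proj I v c := by rw [proj_mem hb, proj_mem hc]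
            exact this ▸ htr
          · exact Or.inr ⟨ha, hc, htr.tail ⟨hb, hc, hr⟩⟩
        · rcases ih with htr | ⟨ha, hb', htr⟩
          · exact Or.inl (htr.tail hstep)
          · refine Or.inl ?_
            have heq : proj I v a = proj I v b := by rw [proj_mem ha, proj_mem hb']
            rw [heq]
            exact TransGen.single hstep
  intro x hx
  rcases key x x hx with h | ⟨-, -, h⟩
  · exact hs.2 _ h
  · exact h1.2 x (TransGen.mono (fun a b (hab : a ∈ I ∧ b ∈ I ∧ r₁ a b) => hab.2.2) x x h)

end Lift


section Retract

variable {V : Type*} {Y : SimpleGraph V} {I : Set V} {v w : V}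
  {r₁ r : V → V → Prop}

lemma cls_self {I : Set V} {v : V} : cls I v v = I ∪ {v} := by simp [cls]

lemma cls_other {I : Set V} {v a : V} (h : a ≠ v) : cls I v a = {a} := by
  simp [cls, h]

lemma lift_contract (hr : r ∈ Acyc Y) (hv : v ∈ I)
    (hI : I = {a | ReflTransGen r v a ∧ ReflTransGen r a w})
    (hag : ∀ a ∈ I, ∀ b ∈ I, r₁ a b ↔ r a b) :
    liftRel Y I v r₁ (contractSetRel r I v) = r := by
  funext a b
  apply propext
  by_cases ha : a ∈ I <;> by_cases hb : b ∈ I <;>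
    simp only [liftRel, if_pos, if_neg, ha, hb]
  · -- both inside
    constructor
    · rintro ⟨hadj, h⟩
      exact (hag a ha b hb).mp h
    · intro h
      exact ⟨rel_adj hr.1 h, (hag a ha b hb).mpr h⟩
  · -- a ∈ I, b ∉ I
    have hbv : b ≠ v := fun h => hb (h ▸ hv)
    constructor
    · rintro ⟨hadj, -, -, -, a', ha', b', hb', hr'⟩
      rw [cls_self] at ha'
      rw [cls_other hbv, Set.mem_singleton_iff] at hb'
      rw [hb'] at hr'
      have ha'I : a' ∈ I := by
        rcases ha' with h | h
        · exact h
        · rw [Set.mem_singleton_iff] at h; exact h ▸ hv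
      rcases (hr.1.1 a b).mp hadj with h | h
      · exact h
      · exact absurd (mem_interval hI ha'I ha hr' h) hb
    · intro h
      refine ⟨rel_adj hr.1 h, by simp, fun hm => hb hm.1, hbv.symm, a, ?_, b, ?_, h⟩
      · rw [cls_self]; exact Or.inl ha
      · rw [cls_other hbv]; rfl
  · -- a ∉ I, b ∈ I
    have hav : a ≠ v := fun h => ha (h ▸ hv)
    constructor
    · rintro ⟨hadj, -, -, -, a', ha', b', hb', hr'⟩
      rw [cls_other hav, Set.mem_singleton_iff] at ha'
      rw [ha'] at hr'
      rw [cls_self] at hb'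
      have hb'I : b' ∈ I := by
        rcases hb' with h | h
        · exact h
        · rw [Set.mem_singleton_iff] at h; exact h ▸ hv
      rcases (hr.1.1 a b).mp hadj with h | h
      · exact h
      · exact absurd (mem_interval hI hb hb'I h hr') ha
    · intro h
      refine ⟨rel_adj hr.1 h, fun hm => ha hm.1, by simp, hav, a, ?_, b, ?_, h⟩
      · rw [cls_other hav]; rfl
      · rw [cls_self]; exact Or.inl hb
  · -- both outside
    have hav : a ≠ v := fun h => ha (h ▸ hv)
    have hbv : b ≠ v := fun h => hb (h ▸ hv)
    constructor
    · rintro ⟨hadj, -, -, -, a', ha', b', hb', hr'⟩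
      rw [cls_other hav, Set.mem_singleton_iff] at ha'
      rw [cls_other hbv, Set.mem_singleton_iff] at hb'
      rw [ha', hb'] at hr'
      exact hr'
    · intro h
      refine ⟨rel_adj hr.1 h, fun hm => ha hm.1, fun hm => hb hm.1,
        rel_ne hr.1 h, a, ?_, b, ?_, h⟩
      · rw [cls_other hav]; rfl
      · rw [cls_other hbv]; rfl

end Retract


section States

variable {V : Type*} {Y : SimpleGraph V} {I : Set V} {v : V}
  {r₁ s : V → V → Prop}

lemma source_out {G : SimpleGraph V} {s : V → V → Prop} (hs : IsOrientation G s)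
    {v : V} (hsrc : IsSource s v) {b : V} (h : G.Adj v b) : s v b :=
  ((hs.1 v b).mp h).resolve_right (hsrc b)

lemma state_empty (hv : v ∈ I) (hs : IsOrientation (contractSetG Y I v) s)
    (hsrc : IsSource s v) :
    stateRel Y I ∅ r₁ s = liftRel Y I v r₁ s := by
  funext a b
  apply propext
  simp only [stateRel, liftRel]
  by_cases ha : a ∈ I <;> by_cases hb : b ∈ I
  · rw [if_pos ha, if_pos ha, if_pos hb, if_pos hb,
      if_pos (by simp : (a ∈ (∅ : Set V) ↔ b ∈ (∅ : Set V)))]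
  · rw [if_pos ha, if_pos ha, if_neg hb, if_neg hb]
    constructor
    · rintro ⟨hadj, -⟩
      exact ⟨hadj, source_out hs hsrc (adj_contract_boundary hv ha hb hadj)⟩
    · rintro ⟨hadj, -⟩
      exact ⟨hadj, by simp⟩
  · rw [if_neg ha, if_neg ha, if_pos hb, if_pos hb]
    constructor
    · rintro ⟨-, h⟩
      exact absurd h (by simp)
    · rintro ⟨-, h⟩
      exact absurd h (hsrc a)
  · rw [if_neg ha, if_neg ha, if_neg hb, if_neg hb]

lemma state_full (hv : v ∈ I) (hs : IsOrientation (contractSetG Y I v) s)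
    (hsrc : IsSource s v) :
    stateRel Y I I r₁ s = liftRel Y I v r₁ (click s v) := by
  funext a b
  apply propext
  simp only [stateRel, liftRel]
  by_cases ha : a ∈ I <;> by_cases hb : b ∈ I
  · rw [if_pos ha, if_pos ha, if_pos hb, if_pos hb, if_pos (iff_of_true ha hb)]
  · have hcl : click s v v b = s b v := by
      unfold click; rw [if_pos (Or.inl rfl)]
    rw [if_pos ha, if_pos ha, if_neg hb, if_neg hb, hcl]
    constructor
    · rintro ⟨-, h⟩
      exact absurd hb (fun _ => h ha)
    · rintro ⟨-, h⟩
      exact absurd h (hsrc b)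
  · have hcl : click s v a v = s v a := by
      unfold click; rw [if_pos (Or.inr rfl)]
    rw [if_neg ha, if_neg ha, if_pos hb, if_pos hb, hcl]
    constructor
    · rintro ⟨hadj, -⟩
      exact ⟨hadj, source_out hs hsrc (adj_contract_boundary hv hb ha hadj.symm)⟩
    · exact fun h => ⟨h.1, hb⟩
  · have hav : v ≠ a := fun h => ha (h ▸ hv)
    have hbv : v ≠ b := fun h => hb (h ▸ hv)
    have hcl : click s v a b = s a b := by
      unfold click; rw [if_neg (by tauto)]
    rw [if_neg ha, if_neg ha, if_neg hb, if_neg hb, hcl]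

lemma state_step (hv : v ∈ I) {J : Set V}
    (hdc : ∀ x ∈ I, ∀ a ∈ J, r₁ x a → x ∈ J)
    {u : V} (hu : u ∈ I) (huJ : u ∉ J)
    (hmin : ∀ x ∈ I, x ∉ J → ¬ r₁ x u) :
    IsSource (stateRel Y I J r₁ s) u ∧
      click (stateRel Y I J r₁ s) u = stateRel Y I (J ∪ {u}) r₁ s := by
  constructor
  · rintro j ⟨hadj, hcond⟩
    by_cases hj : j ∈ I
    · rw [if_pos hj, if_pos hu] at hcond
      by_cases hjJ : j ∈ J
      · rw [if_neg (by tauto)] at hcond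
        exact huJ (hdc u hu j hjJ hcond)
      · rw [if_pos (by tauto)] at hcond
        exact hmin j hj hjJ hcond
    · rw [if_neg hj, if_pos hu] at hcond
      exact huJ hcond
  · funext a b
    apply propext
    unfold click stateRel
    by_cases hua : u = a <;> by_cases hub : u = b
    · rw [← hua, ← hub]
      simp
    · subst hua
      by_cases hb : b ∈ I <;> by_cases hbJ : b ∈ J <;>
        simp [hu, huJ, hb, hbJ, Ne.symm hub, hub, Y.adj_comm]
    · subst hub
      by_cases ha : a ∈ I <;> by_cases haJ : a ∈ J <;>
        simp [hu, huJ, ha, haJ, Ne.symm hua, hua, Y.adj_comm]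
    · have h1 : ¬ (u = a ∨ u = b) := by tauto
      rw [if_neg h1]
      by_cases ha : a ∈ I <;> by_cases hb : b ∈ I <;>
        by_cases haJ : a ∈ J <;> by_cases hbJ : b ∈ J <;>
          simp [ha, hb, haJ, hbJ, hua, hub, Ne.symm hua, Ne.symm hub]

end States


section Chain

variable {V : Type*} {Y : SimpleGraph V} {I : Set V} {v : V}
  {r₁ s : V → V → Prop}

lemma exists_min_acyclic [Finite V] {r : V → V → Prop} (hr : IsAcyclicRel r)
    {S : Set V} (hS : S.Nonempty) : ∃ u ∈ S, ∀ x ∈ S, ¬ r x u := by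
  haveI : IsTrans V (TransGen r) := ⟨fun _ _ _ => TransGen.trans⟩
  haveI : IsIrrefl V (TransGen r) := ⟨hr⟩
  obtain ⟨u, huS, hmin⟩ :=
    (Finite.wellFounded_of_trans_of_irrefl (TransGen r)).has_min S hS
  exact ⟨u, huS, fun x hx hrx => hmin x hx (TransGen.single hrx)⟩

lemma state_chain [Finite V] (hv : v ∈ I) (h1 : IsAcyclicRel r₁) :
    ∀ n (J : Set V), J ⊆ I → (∀ x ∈ I, ∀ a ∈ J, r₁ x a → x ∈ J) →
      (I \ J).ncard = n → stateRel Y I J r₁ s ∈ Acyc Y →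
      Relation.EqvGen (ClickStep Y) (stateRel Y I J r₁ s) (stateRel Y I I r₁ s) := by
  intro n
  induction n with
  | zero =>
      intro J hJ _ hcard _
      have hJI : J = I := by
        apply Set.Subset.antisymm hJ
        intro x hx
        by_contra hxJ
        have hne : (I \ J).Nonempty := ⟨x, hx, hxJ⟩
        rw [← Set.ncard_pos (Set.toFinite _)] at hne
        omega
      rw [hJI]
      exact Relation.EqvGen.refl _
  | succ n ih =>
      intro J hJ hdc hcard hacyc
      have hne : (I \ J).Nonempty := by
        rw [← Set.ncard_pos (Set.toFinite _)]
        omega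
      obtain ⟨u, huIJ, hmin⟩ := exists_min_acyclic h1 hne
      obtain ⟨huI, huJ⟩ := huIJ
      have hmin' : ∀ x ∈ I, x ∉ J → ¬ r₁ x u := fun x hx hxJ => hmin x ⟨hx, hxJ⟩
      obtain ⟨hsrc, hclick⟩ := state_step (s := s) hv hdc huI huJ hmin'
      have hnext : stateRel Y I (J ∪ {u}) r₁ s ∈ Acyc Y :=
        hclick ▸ acyc_click hacyc hsrc
      refine Relation.EqvGen.trans _ _ _
        (Relation.EqvGen.rel _ _ ⟨hacyc, u, hsrc, hclick.symm⟩)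
        (ih (J ∪ {u}) ?_ ?_ ?_ hnext)
      · rw [Set.union_subset_iff]
        exact ⟨hJ, by simpa using huI⟩
      · intro x hx a haJ hr
        rcases haJ with haJ | hau
        · exact Or.inl (hdc x hx a haJ hr)
        · rw [Set.mem_singleton_iff] at hau
          subst hau
          by_cases hxJ : x ∈ J
          · exact Or.inl hxJ
          · exact absurd hr (hmin' x hx hxJ)
      · have : I \ (J ∪ {u}) = (I \ J) \ {u} := by
          rw [Set.diff_diff]
        rw [this]
        have := Set.ncard_diff_singleton_add_one (a := u) (s := I \ J) ⟨huI, huJ⟩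
          (Set.toFinite _)
        omega

lemma lift_click_v [Finite V] (hv : v ∈ I) (h1 : r₁ ∈ Acyc Y)
    (hs : s ∈ Acyc (contractSetG Y I v)) (hsrc : IsSource s v) :
    KEquiv Y (liftRel Y I v r₁ s) (liftRel Y I v r₁ (click s v)) := by
  rw [← state_empty (r₁ := r₁) hv hs.1 hsrc, ← state_full (r₁ := r₁) hv hs.1 hsrc]
  refine state_chain hv h1.2 I.ncard ∅ (Set.empty_subset I) (by simp) (by simp) ?_
  rw [state_empty (r₁ := r₁) hv hs.1 hsrc]
  exact ⟨lift_isOrientation hv h1.1 hs.1, lift_acyclic hv h1 hs⟩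

lemma lift_click_outside (hv : v ∈ I) {u : V} (hu : u ∉ I) (hsrc : IsSource s u) :
    IsSource (liftRel Y I v r₁ s) u ∧
      liftRel Y I v r₁ (click s u) = click (liftRel Y I v r₁ s) u := by
  have huv : u ≠ v := fun h => hu (h ▸ hv)
  constructor
  · rintro j ⟨hadj, h⟩
    by_cases hj : j ∈ I
    · rw [if_pos hj, if_neg hu] at h
      exact hsrc v h
    · rw [if_neg hj, if_neg hu] at h
      exact hsrc j h
  · funext a b
    apply propext
    unfold click liftRel
    by_cases hua : u = a <;> by_cases hub : u = b
    · rw [← hua, ← hub]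
      simp
    · subst hua
      rw [if_pos (Or.inl rfl)]
      by_cases hb : b ∈ I <;>
        simp [hu, hb, huv, Ne.symm huv, Y.adj_comm, hub, Ne.symm hub]
    · subst hub
      rw [if_pos (Or.inr rfl)]
      by_cases ha : a ∈ I <;>
        simp [hu, ha, huv, Ne.symm huv, Y.adj_comm, hua, Ne.symm hua]
    · have h1 : ¬ (u = a ∨ u = b) := by tauto
      rw [if_neg h1]
      by_cases ha : a ∈ I <;> by_cases hb : b ∈ I <;>
        simp [ha, hb, hua, hub, huv, Ne.symm huv, Ne.symm hua, Ne.symm hub]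

end Chain


section EmptyCase

variable {V : Type*} {Y : SimpleGraph V} {v : V} {r : V → V → Prop}

lemma cls_empty (v a : V) : cls (∅ : Set V) v a = {a} := by
  unfold cls
  split_ifs with h
  · rw [h]
    simp
  · rfl

lemma contractSetG_empty (Y : SimpleGraph V) (v : V) :
    contractSetG Y (∅ : Set V) v = Y := by
  ext a b
  constructor
  · rintro ⟨-, -, -, a', ha', b', hb', hadj⟩
    rw [cls_empty, Set.mem_singleton_iff] at ha' hb'
    rw [ha', hb'] at hadj
    exact hadj
  · intro hadj
    exact ⟨by simp, by simp, hadj.ne, a, by rw [cls_empty]; rfl, b,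
      by rw [cls_empty]; rfl, hadj⟩

lemma contractSetRel_empty (h : IsOrientation Y r) (v : V) :
    contractSetRel r (∅ : Set V) v = r := by
  funext a b
  apply propext
  constructor
  · rintro ⟨-, -, -, a', ha', b', hb', hr'⟩
    rw [cls_empty, Set.mem_singleton_iff] at ha' hb'
    rw [ha', hb'] at hr'
    exact hr'
  · intro hr'
    exact ⟨by simp, by simp, rel_ne h hr', a, by rw [cls_empty]; rfl, b,
      by rw [cls_empty]; rfl, hr'⟩

end EmptyCase

/-- let I be the vw-interval of both acyclic orientations r₁, r₂
of Y (which agree on I). If the induced orientations of the contracted graph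
Y_I (I contracted to the vertex v) are κ-equivalent in Y_I, then r₁ and r₂ are
κ-equivalent in Y. -/
theorem kappa_equiv_of_contraction {V : Type*} [Fintype V] (Y : SimpleGraph V)
    (v w : V) (he : Y.Adj v w) (r₁ r₂ : V → V → Prop)
    (h₁ : r₁ ∈ Acyc Y) (h₂ : r₂ ∈ Acyc Y) (I : Set V)
    (hI₁ : I = {a | Relation.ReflTransGen r₁ v a ∧ Relation.ReflTransGen r₁ a w})
    (hI₂ : I = {a | Relation.ReflTransGen r₂ v a ∧ Relation.ReflTransGen r₂ a w})
    (hagree : ∀ a ∈ I, ∀ b ∈ I, r₁ a b ↔ r₂ a b)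
    (hk : KEquiv (contractSetG Y I v)
      (contractSetRel r₁ I v) (contractSetRel r₂ I v)) :
    KEquiv Y r₁ r₂ := by
  classical
  by_cases hv : v ∈ I
  · have key : ∀ s t, Relation.EqvGen (ClickStep (contractSetG Y I v)) s t →
        KEquiv Y (liftRel Y I v r₁ s) (liftRel Y I v r₁ t) := by
      intro s t h
      induction h with
      | rel s t hst =>
          obtain ⟨hs, u, hu, rfl⟩ := hst
          by_cases huI : u ∈ I
          · by_cases huv : u = v
            · subst huv
              exact lift_click_v hv h₁ hs hu
            · rw [click_isolated hs.1 huI huv]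
              exact Relation.EqvGen.refl _
          · obtain ⟨hsrc, heq⟩ := lift_click_outside (r₁ := r₁) hv huI hu
            exact Relation.EqvGen.rel _ _
              ⟨⟨lift_isOrientation hv h₁.1 hs.1, lift_acyclic hv h₁ hs⟩, u, hsrc, heq⟩
      | refl s => exact Relation.EqvGen.refl _
      | symm s t _ ih => exact Relation.EqvGen.symm _ _ ih
      | trans s t u _ _ ih1 ih2 => exact Relation.EqvGen.trans _ _ _ ih1 ih2
    have e₁ := lift_contract (r₁ := r₁) h₁ hv hI₁ (fun a _ b _ => Iff.rfl)
    have e₂ := lift_contract (r₁ := r₁) h₂ hv hI₂ hagree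
    have hres := key _ _ hk
    rw [e₁, e₂] at hres
    exact hres
  · have hIempty : I = ∅ := by
      ext a
      simp only [Set.mem_empty_iff_false, iff_false]
      intro haI
      apply hv
      rw [hI₁] at haI ⊢
      exact ⟨ReflTransGen.refl, haI.1.trans haI.2⟩
    subst hIempty
    rw [contractSetG_empty, contractSetRel_empty h₁.1, contractSetRel_empty h₂.1] at hk
    exact hk

end AcycPaper
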